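/- Given a graph G, an orthonormal basis U ∈ ℂ^{n×n}, and the randomized local aggregation matrix Φ with minimum node multiplicity g_min, suppose the signal x = U_{|S} x̂_S has known support S with |S| = k and g_min ≥ k. Then with probability 1 the matrix Ψ_{|S} = Φ U_{|S} has full column rank k, so x is perfectly recoverable from y = Φx by least squares. -/

import Mathlib

open MeasureTheory ProbabilityTheory Matrix

private lemma measurable_mvpoly_eval {ι α : Type*} [MeasurableSpace α]
    (q : MvPolynomial ι ℂ) (g : ι → α → ℂ) (hg : ∀ i, Measurable (g i)) :
    Measurable fun a => MvPolynomial.eval (fun i => g i a) q := by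
  classical
  simp only [MvPolynomial.eval_eq]
  refine Finset.measurable_sum _ fun d _ => Measurable.mul measurable_const ?_
  exact Finset.measurable_prod _ fun i _ => (hg i).pow_const _

private lemma pi_null_fin : ∀ (n : ℕ) (ν : Fin n → Measure ℝ),
    (∀ i, IsProbabilityMeasure (ν i)) → (∀ i (s : Set ℝ), s.Finite → ν i s = 0) →
    ∀ q : MvPolynomial (Fin n) ℂ, q ≠ 0 →
    Measure.pi ν {x | MvPolynomial.eval (fun i => (x i : ℂ)) q = 0} = 0 := by
  intro n
  induction n with
  | zero =>
    intro ν _ _ q hq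
    obtain ⟨c, rfl⟩ := MvPolynomial.C_surjective (Fin 0) q
    have hc : c ≠ 0 := fun h => hq (by rw [h, map_zero])
    have : {x : Fin 0 → ℝ | MvPolynomial.eval (fun i => (x i : ℂ)) (MvPolynomial.C c) = 0}
        = (∅ : Set (Fin 0 → ℝ)) := by
      ext x; simp [MvPolynomial.eval_C, hc]
    rw [this]; simp
  | succ n ih =>
    intro ν hP hnull q hq
    haveI := hP
    haveI : ∀ i, SigmaFinite (ν i) := fun i => inferInstance
    set Q : Polynomial (MvPolynomial (Fin n) ℂ) := MvPolynomial.finSuccEquiv ℂ n q with hQdef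
    have hQ : Q ≠ 0 := by
      simp only [hQdef]
      exact (map_ne_zero_iff _ (AlgEquiv.injective _)).mpr hq
    set c : MvPolynomial (Fin n) ℂ := Q.leadingCoeff with hcdef
    have hc : c ≠ 0 := Polynomial.leadingCoeff_ne_zero.mpr hQ
    set ν' : Fin n → Measure ℝ := fun j => ν ((0 : Fin (n + 1)).succAbove j) with hν'
    haveI : ∀ j, IsProbabilityMeasure (ν' j) := fun j => hP _
    have hBad : Measure.pi ν' {y | MvPolynomial.eval (fun i => (y i : ℂ)) c = 0} = 0 :=
      ih ν' (fun j => hP _) (fun j => hnull _) c hc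
    -- the set in the product space
    set Z' : Set (ℝ × (Fin n → ℝ)) :=
      {p | Polynomial.eval (p.1 : ℂ)
        (Polynomial.map (MvPolynomial.eval fun j => (p.2 j : ℂ)) Q) = 0} with hZ'def
    have hkey : ∀ (a : ℝ) (y : Fin n → ℝ),
        Polynomial.eval (a : ℂ) (Polynomial.map (MvPolynomial.eval fun j => (y j : ℂ)) Q)
          = MvPolynomial.eval (Fin.cons (a : ℂ) (fun j => (y j : ℂ))) q :=
      fun a y => (MvPolynomial.eval_eq_eval_mv_eval' _ _ _).symm
    have hZ'meas : MeasurableSet Z' := by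
      have : Measurable fun p : ℝ × (Fin n → ℝ) =>
          MvPolynomial.eval (fun i => Fin.cons ((p.1 : ℝ) : ℂ) (fun j => ((p.2 j : ℝ) : ℂ)) i) q := by
        refine measurable_mvpoly_eval q _ fun i => ?_
        refine Fin.cases ?_ ?_ i
        · simpa [Function.comp_def] using Complex.measurable_ofReal.comp measurable_fst
        · intro j
          simpa [Function.comp_def] using Complex.measurable_ofReal.comp ((measurable_pi_apply j).comp measurable_snd)
      have hset : Z' = (fun p : ℝ × (Fin n → ℝ) =>
          MvPolynomial.eval (fun i => Fin.cons ((p.1 : ℝ) : ℂ) (fun j => ((p.2 j : ℝ) : ℂ)) i) q)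
            ⁻¹' {0} := by
        ext p
        simp only [hZ'def, Set.mem_setOf_eq, Set.mem_preimage, Set.mem_singleton_iff]
        rw [hkey p.1 p.2]
      rw [hset]
      exact this (measurableSet_singleton 0)
    have hprod : ((ν 0).prod (Measure.pi ν')) Z' = 0 := by
      rw [Measure.prod_apply_symm hZ'meas]
      have hae : ∀ᵐ y ∂(Measure.pi ν'), (ν 0) ((fun x => (x, y)) ⁻¹' Z') = 0 := by
        have h1 : ∀ᵐ y ∂(Measure.pi ν'),
            y ∉ {y : Fin n → ℝ | MvPolynomial.eval (fun i => (y i : ℂ)) c = 0} :=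
          measure_eq_zero_iff_ae_notMem.mp hBad
        filter_upwards [h1] with y hy
        have hPy : Polynomial.map (MvPolynomial.eval fun j => (y j : ℂ)) Q ≠ 0 := by
          intro h
          apply hy
          have := congrArg (fun p => Polynomial.coeff p Q.natDegree) h
          simpa [Polynomial.coeff_map] using this
        have hfin : ((fun x : ℝ => (x, y)) ⁻¹' Z').Finite := by
          have : ((fun x : ℝ => (x, y)) ⁻¹' Z') ⊆
              (fun x : ℝ => (x : ℂ)) ⁻¹'
                {z : ℂ | (Polynomial.map (MvPolynomial.eval fun j => (y j : ℂ)) Q).IsRoot z} := by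
            intro x hx
            exact hx
          exact ((Polynomial.finite_setOf_isRoot hPy).preimage
            Complex.ofReal_injective.injOn).subset this
        exact hnull 0 _ hfin
      calc ∫⁻ y, (ν 0) ((fun x => (x, y)) ⁻¹' Z') ∂(Measure.pi ν')
          = ∫⁻ _, 0 ∂(Measure.pi ν') := lintegral_congr_ae hae
        _ = 0 := lintegral_zero
    have hZZ' : {x : Fin (n+1) → ℝ | MvPolynomial.eval (fun i => (x i : ℂ)) q = 0}
        = (MeasurableEquiv.piFinSuccAbove (fun _ : Fin (n+1) => ℝ) 0) ⁻¹' Z' := by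
      ext x
      simp only [Set.mem_setOf_eq, Set.mem_preimage, hZ'def]
      have h2 : (MeasurableEquiv.piFinSuccAbove (fun _ : Fin (n+1) => ℝ) 0) x
          = (x 0, fun j => x ((0 : Fin (n+1)).succAbove j)) := rfl
      rw [h2]
      have h3 : (fun i => (x i : ℂ))
          = Fin.cons ((x 0 : ℝ) : ℂ) (fun j => ((x ((0 : Fin (n+1)).succAbove j) : ℝ) : ℂ)) := by
        funext i
        refine Fin.cases ?_ ?_ i
        · rfl
        · intro j
          simp [Fin.succAbove_zero]
      rw [h3, hkey]
    rw [hZZ']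
    have hmp := measurePreserving_piFinSuccAbove ν 0
    rw [hmp.measure_preimage hZ'meas.nullMeasurableSet]
    exact hprod

private lemma pi_null {ι : Type*} [Fintype ι] (ν : ι → Measure ℝ)
    [hP : ∀ i, IsProbabilityMeasure (ν i)] (hnull : ∀ i (s : Set ℝ), s.Finite → ν i s = 0)
    (q : MvPolynomial ι ℂ) (hq : q ≠ 0) :
    Measure.pi ν {x | MvPolynomial.eval (fun i => (x i : ℂ)) q = 0} = 0 := by
  classical
  haveI : ∀ i, SigmaFinite (ν i) := fun i => inferInstance
  set e := Fintype.equivFin ι with he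
  have hmp := measurePreserving_piCongrLeft (α := fun _ : ι => ℝ) ν e.symm
  have hmeasZ : MeasurableSet {x : ι → ℝ | MvPolynomial.eval (fun i => (x i : ℂ)) q = 0} := by
    have hm : Measurable fun x : ι → ℝ => MvPolynomial.eval (fun i => ((x i : ℝ) : ℂ)) q :=
      measurable_mvpoly_eval q _ fun i => Complex.measurable_ofReal.comp (measurable_pi_apply i)
    exact hm (measurableSet_singleton 0)
  rw [← hmp.measure_preimage hmeasZ.nullMeasurableSet]
  have hTx : ∀ (x : Fin (Fintype.card ι) → ℝ) (i : ι),
      (MeasurableEquiv.piCongrLeft (fun _ : ι => ℝ) e.symm) x i = x (e i) := by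
    intro x i
    conv_lhs => rw [← e.symm_apply_apply i]
    exact MeasurableEquiv.piCongrLeft_apply_apply (β := fun _ : ι => ℝ) e.symm x (e i)
  have hpre : (MeasurableEquiv.piCongrLeft (fun _ : ι => ℝ) e.symm)
        ⁻¹' {x | MvPolynomial.eval (fun i => (x i : ℂ)) q = 0}
      = {x : Fin (Fintype.card ι) → ℝ |
          MvPolynomial.eval (fun j => (x j : ℂ)) (MvPolynomial.rename e q) = 0} := by
    ext x
    simp only [Set.mem_preimage, Set.mem_setOf_eq, MvPolynomial.eval_rename]
    have : (fun i => (((MeasurableEquiv.piCongrLeft (fun _ : ι => ℝ) e.symm) x) i : ℂ))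
        = (fun j : Fin (Fintype.card ι) => ((x j : ℝ) : ℂ)) ∘ e := by
      funext i; simp [hTx x i, Function.comp]
    rw [this]
  rw [hpre]
  refine pi_null_fin _ _ (fun j => hP _) (fun j => hnull _) (MvPolynomial.rename (⇑e) q) ?_
  intro h
  exact hq (MvPolynomial.rename_injective _ e.injective (h.trans (map_zero _).symm))


/-- Known-support perfect reconstruction: for the randomized local aggregation
matrix `Φ` (Gaussian entries `N(0, 1/g j)` on the augmented neighborhoods of a
sampling set covering a dominating set) and unitary `U`, if the support `S` has
`|S| = k` and `g_min ≥ k`, then with probability 1 the matrix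
`Ψ_{|S} = Φ U_{|S}` has full column rank `k`. -/
theorem stmt7 {V : Type*} [Fintype V] [DecidableEq V] {m k : ℕ}
    {Ω : Type*} [MeasurableSpace Ω] (μ : Measure Ω) [IsProbabilityMeasure μ]
    (Nbar : V → Finset V) (hself : ∀ i, i ∈ Nbar i)
    (π : Fin m → V) (hdom : ∀ j : V, ∃ i : Fin m, j ∈ Nbar (π i))
    (g : V → ℕ)
    (hg : ∀ j, g j = (Finset.univ.filter fun i : Fin m => j ∈ Nbar (π i)).card)
    (hgmin : ∀ j, k ≤ g j)
    (Φ : Ω → Matrix (Fin m) V ℝ)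
    (hzero : ∀ ω i j, j ∉ Nbar (π i) → Φ ω i j = 0)
    (hmeas : ∀ i j, Measurable fun ω => Φ ω i j)
    (hgauss : ∀ i j, j ∈ Nbar (π i) →
      Measure.map (fun ω => Φ ω i j) μ = gaussianReal 0 (1 / (g j : NNReal)))
    (hindep : iIndepFun
      (fun (p : Fin m × V) ω => Φ ω p.1 p.2) μ)
    (U : Matrix V V ℂ) (hU : U ∈ Matrix.unitaryGroup V ℂ)
    (S : Finset V) (hS : S.card = k) :
    ∀ᵐ ω ∂μ, (Matrix.of fun (i : Fin m) (s : ↥S) =>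
      (((Φ ω).map (fun r => (r : ℂ))) * U) i s.1).rank = k := by
  classical
  -- cardinality of the support index
  have hcardS : Fintype.card ↥S = k := by rw [Fintype.card_coe, hS]
  -- U is a unit
  have hUunit : IsUnit U :=
    ⟨⟨U, star U, Matrix.mem_unitaryGroup_iff.mp hU, Matrix.mem_unitaryGroup_iff'.mp hU⟩, rfl⟩
  -- the matrix of the S-columns of U, rows indexed by V
  set AS : Matrix V ↥S ℂ := Matrix.of (fun j (s : ↥S) => U j s.1) with hAS
  -- columns of U are linearly independent, hence so are the S-columns
  have hcolsU : LinearIndependent ℂ (fun j : V => Uᵀ j) :=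
    Matrix.linearIndependent_cols_iff_isUnit.mpr hUunit
  have hcolsA : LinearIndependent ℂ (fun s : ↥S => ASᵀ s) := by
    have := hcolsU.comp (fun s : ↥S => (s : V)) Subtype.val_injective
    exact this
  -- rank of AS is k
  have hrankA : AS.rank = k := by
    have h1 : ASᵀ.rank = Fintype.card ↥S := hcolsA.rank_matrix
    rw [← Matrix.rank_transpose, h1, hcardS]
  -- choose k linearly independent rows of AS
  obtain ⟨b, hb_sub, hb_span, hb_li⟩ :=
    exists_linearIndependent ℂ (Set.range (fun j : V => AS j))
  have hb_fin : b.Finite := (Set.finite_range _).subset hb_sub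
  haveI : Fintype b := hb_fin.fintype
  have hb_card : Fintype.card b = k := by
    have h1 := linearIndependent_iff_card_eq_finrank_span.mp hb_li
    rw [h1]
    have h2 : Set.range ((↑) : b → (↥S → ℂ)) = b := Subtype.range_coe
    rw [Set.finrank, h2, hb_span]
    rw [← hrankA, Matrix.rank_eq_finrank_span_row]
    rfl
  -- bijection between S and b
  have heqv : Nonempty (↥S ≃ b) := by
    apply Fintype.card_eq.mp
    rw [hcardS, hb_card]
  obtain ⟨eqv⟩ := heqv
  -- choose a row index for each element of b
  have hch : ∀ v : b, ∃ j : V, AS j = (v : ↥S → ℂ) := fun v => hb_sub v.2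
  set ch : b → V := fun v => (hch v).choose with hchdef
  have hch_spec : ∀ v : b, AS (ch v) = (v : ↥S → ℂ) := fun v => (hch v).choose_spec
  set c : ↥S → V := fun s => ch (eqv s) with hc
  have hc_rows : ∀ s : ↥S, AS (c s) = ((eqv s : b) : ↥S → ℂ) := fun s => hch_spec (eqv s)
  -- the square submatrix of U with rows c and columns S is invertible
  set M0 : Matrix ↥S ↥S ℂ := Matrix.of (fun t s : ↥S => U (c t) s.1) with hM0
  have hM0unit : IsUnit M0 := by
    rw [← Matrix.linearIndependent_rows_iff_isUnit]
    have h1 : LinearIndependent ℂ (fun s : ↥S => ((eqv s : b) : ↥S → ℂ)) :=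
      hb_li.comp (fun s => eqv s) eqv.injective
    have h2 : (fun t : ↥S => M0 t) = fun s : ↥S => ((eqv s : b) : ↥S → ℂ) := by
      funext t
      rw [← hc_rows t]
      rfl
    rw [show M0.row = fun t : ↥S => M0 t from rfl, h2]
    exact h1
  have hM0det : M0.det ≠ 0 := by
    intro h
    have := (Matrix.isUnit_iff_isUnit_det M0).mp hM0unit
    rw [h] at this
    exact this.ne_zero rfl
  -- Hall's theorem: a system of distinct representative rows
  have hhall : ∀ s' : Finset ↥S,
      s'.card ≤ (s'.biUnion fun s => Finset.univ.filter fun i : Fin m => c s ∈ Nbar (π i)).card := by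
    intro s'
    rcases s'.eq_empty_or_nonempty with h | ⟨x, hx⟩
    · simp [h]
    · calc s'.card ≤ Fintype.card ↥S := Finset.card_le_univ s'
        _ = k := hcardS
        _ ≤ g (c x) := hgmin _
        _ = (Finset.univ.filter fun i : Fin m => c x ∈ Nbar (π i)).card := hg _
        _ ≤ _ := Finset.card_le_card (Finset.subset_biUnion_of_mem (fun s => Finset.univ.filter fun i : Fin m => c s ∈ Nbar (π i)) hx)
  obtain ⟨σ, hσinj, hσmem⟩ := (Finset.all_card_le_biUnion_card_iff_exists_injective _).mp hhall
  have hσNbar : ∀ s : ↥S, c s ∈ Nbar (π (σ s)) := by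
    intro s
    have := hσmem s
    simp only [Finset.mem_filter, Finset.mem_univ, true_and] at this
    exact this
  -- the index type of the Gaussian entries
  set E := {p : Fin m × V // p.2 ∈ Nbar (π p.1)} with hE
  -- the random vector of entries and its law
  set ν : E → Measure ℝ := fun e => gaussianReal 0 (1 / (g e.1.2 : NNReal)) with hν
  haveI hνP : ∀ e : E, IsProbabilityMeasure (ν e) := fun e =>
    inferInstanceAs (IsProbabilityMeasure (gaussianReal _ _))
  haveI hνSF : ∀ e : E, SigmaFinite (ν e) := fun e => inferInstance
  have hνnull : ∀ (e : E) (s : Set ℝ), s.Finite → ν e s = 0 := by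
    intro e s hs
    have hg1 : 1 ≤ g e.1.2 := by
      rw [hg]
      refine Finset.card_pos.mpr ⟨e.1.1, ?_⟩
      simp only [Finset.mem_filter, Finset.mem_univ, true_and]
      exact e.2
    have hv : (1 / (g e.1.2 : NNReal)) ≠ 0 := by
      apply one_div_ne_zero
      exact Nat.cast_ne_zero.mpr (by omega)
    have habs := gaussianReal_absolutelyContinuous 0 hv
    exact habs (hs.countable.measure_zero _)
  set X : Ω → E → ℝ := fun ω e => Φ ω e.1.1 e.1.2 with hX
  have hXmeas : Measurable X := measurable_pi_lambda _ fun e => hmeas _ _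
  have hlaw : Measure.map X μ = Measure.pi ν := by
    refine (Measure.pi_eq fun s hs => ?_).symm
    rw [Measure.map_apply hXmeas (MeasurableSet.univ_pi hs)]
    have hpre : X ⁻¹' Set.pi Set.univ s =
        ⋂ p ∈ Finset.univ.filter (fun p : Fin m × V => p.2 ∈ Nbar (π p.1)),
          (fun ω => Φ ω p.1 p.2) ⁻¹'
            (if h : p.2 ∈ Nbar (π p.1) then s ⟨p, h⟩ else Set.univ) := by
      ext ω
      simp only [Set.mem_preimage, Set.mem_pi, Set.mem_univ, forall_true_left,
        Set.mem_iInter, Finset.mem_filter, Finset.mem_univ, true_and]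
      constructor
      · intro h p hp
        rw [dif_pos hp]
        exact h ⟨p, hp⟩
      · intro h e
        have := h e.1 e.2
        rwa [dif_pos e.2, Subtype.coe_eta] at this
    rw [hpre]
    rw [hindep.measure_inter_preimage_eq_mul _ (fun p hp => by
      by_cases h : p.2 ∈ Nbar (π p.1)
      · rw [dif_pos h]; exact hs _
      · rw [dif_neg h]; exact MeasurableSet.univ)]
    rw [Finset.prod_subtype (Finset.univ.filter (fun p : Fin m × V => p.2 ∈ Nbar (π p.1)))
      (p := fun p : Fin m × V => p.2 ∈ Nbar (π p.1))
      (by intro x; simp) (fun p => μ ((fun ω => Φ ω p.1 p.2) ⁻¹'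
        (if h : p.2 ∈ Nbar (π p.1) then s ⟨p, h⟩ else Set.univ)))]
    refine Finset.prod_congr rfl fun e _ => ?_
    rw [dif_pos e.2, Subtype.coe_eta,
      ← Measure.map_apply (hmeas e.1.1 e.1.2) (hs e), hgauss e.1.1 e.1.2 e.2]
  -- the matrix as a function of the entries
  set Ψ : (E → ℝ) → Matrix (Fin m) ↥S ℂ := fun x => Matrix.of fun i s =>
    ∑ j : V, (if h : j ∈ Nbar (π i) then ((x ⟨(i, j), h⟩ : ℝ) : ℂ) else 0) * U j s.1 with hΨ
  have hΨω : ∀ ω, (Matrix.of fun (i : Fin m) (s : ↥S) =>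
      (((Φ ω).map (fun r => (r : ℂ))) * U) i s.1) = Ψ (X ω) := by
    intro ω
    ext i s
    simp only [Matrix.of_apply, Matrix.mul_apply, Matrix.map_apply, hΨ]
    refine Finset.sum_congr rfl fun j _ => ?_
    by_cases h : j ∈ Nbar (π i)
    · rw [dif_pos h]
    · rw [dif_neg h, hzero ω i j h]
      simp
  -- the determinant polynomial
  set q : MvPolynomial E ℂ := Matrix.det (Matrix.of fun t s : ↥S =>
    ∑ j : V, (if h : j ∈ Nbar (π (σ t)) then MvPolynomial.X ⟨(σ t, j), h⟩ else 0) *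
      MvPolynomial.C (U j s.1)) with hq
  -- selection matrix
  set P : Matrix ↥S (Fin m) ℂ := Matrix.of fun t i => if σ t = i then 1 else 0 with hP
  have hPΨ : ∀ x : E → ℝ, (P * Ψ x) = Matrix.of (fun t s : ↥S => Ψ x (σ t) s) := by
    intro x
    ext t s
    simp only [Matrix.mul_apply, hP, Matrix.of_apply, ite_mul, one_mul, zero_mul]
    rw [Finset.sum_ite_eq]
    simp
  have heval : ∀ x : E → ℝ,
      MvPolynomial.eval (fun e => (x e : ℂ)) q = (Matrix.of fun t s : ↥S => Ψ x (σ t) s).det := by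
    intro x
    rw [hq, RingHom.map_det]
    congr 1
    ext t s
    simp only [RingHom.mapMatrix_apply, Matrix.map_apply, Matrix.of_apply, _root_.map_sum, _root_.map_mul, MvPolynomial.eval_C, hΨ]
    refine Finset.sum_congr rfl fun j _ => ?_
    by_cases h : j ∈ Nbar (π (σ t))
    · rw [dif_pos h, dif_pos h, MvPolynomial.eval_X]
    · rw [dif_neg h, dif_neg h, map_zero]
  -- the witness: q is not the zero polynomial
  set x₀ : E → ℝ := fun e => if ∃ s : ↥S, σ s = e.1.1 ∧ c s = e.1.2 then 1 else 0 with hx₀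
  have hwitness : (Matrix.of fun t s : ↥S => Ψ x₀ (σ t) s) = M0 := by
    ext t s
    simp only [Matrix.of_apply, hΨ, hM0]
    rw [Finset.sum_eq_single (c t)]
    · rw [dif_pos (hσNbar t)]
      have : x₀ ⟨(σ t, c t), hσNbar t⟩ = 1 := by
        rw [hx₀]
        exact if_pos ⟨t, rfl, rfl⟩
      rw [this]
      simp
    · intro j _ hj
      by_cases h : j ∈ Nbar (π (σ t))
      · rw [dif_pos h]
        have : x₀ ⟨(σ t, j), h⟩ = 0 := by
          rw [hx₀]
          refine if_neg ?_
          rintro ⟨s', hs1, hs2⟩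
          have h1 : s' = t := hσinj hs1
          have h2 : c t = j := by rw [← h1]; exact hs2
          exact hj h2.symm
        rw [this]
        simp
      · rw [dif_neg h]
        simp
    · intro h
      exact absurd (Finset.mem_univ _) h
  have hq0 : q ≠ 0 := by
    intro h
    have h1 := heval x₀
    rw [h, map_zero, hwitness] at h1
    exact hM0det h1.symm
  -- conclusion
  have hAmeas : MeasurableSet {x : E → ℝ | MvPolynomial.eval (fun e => (x e : ℂ)) q = 0} := by
    have hm : Measurable fun x : E → ℝ => MvPolynomial.eval (fun e => ((x e : ℝ) : ℂ)) q :=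
      measurable_mvpoly_eval q _ fun e => Complex.measurable_ofReal.comp (measurable_pi_apply e)
    exact hm (measurableSet_singleton 0)
  have hnullA : μ (X ⁻¹' {x : E → ℝ | MvPolynomial.eval (fun e => (x e : ℂ)) q = 0}) = 0 := by
    rw [← Measure.map_apply hXmeas hAmeas, hlaw]
    exact pi_null ν hνnull q hq0
  rw [ae_iff]
  refine measure_mono_null ?_ hnullA
  intro ω hω
  simp only [Set.mem_setOf_eq] at hω
  simp only [Set.mem_preimage, Set.mem_setOf_eq]
  by_contra hne
  apply hω
  -- from nonvanishing determinant, the rank is k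
  have hdet : (Matrix.of fun t s : ↥S => Ψ (X ω) (σ t) s).det ≠ 0 := by
    rw [← heval]
    exact hne
  have hunit : IsUnit (Matrix.of fun t s : ↥S => Ψ (X ω) (σ t) s) := by
    rw [Matrix.isUnit_iff_isUnit_det]
    exact hdet.isUnit
  have hranksub : (Matrix.of fun t s : ↥S => Ψ (X ω) (σ t) s).rank = k := by
    rw [Matrix.rank_of_isUnit _ hunit, hcardS]
  have hge : k ≤ (Ψ (X ω)).rank := by
    rw [← hranksub, ← hPΨ (X ω)]
    exact Matrix.rank_mul_le_right P (Ψ (X ω))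
  have hle : (Ψ (X ω)).rank ≤ k := by
    have := Matrix.rank_le_card_width (Ψ (X ω))
    rwa [hcardS] at this
  rw [hΨω ω]
  exact le_antisymm hle hge
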